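/- Let Σ_τ be the 6×6 matrix equal to (1/20160) times the matrix with rows (1820, 28, 28, −462, −462, −952), (28, 1020, 380, −406, −406, −616), (28, 380, 1020, −406, −406, −616), (−462, −406, −406, 6259, −4453, −532), (−462, −406, −406, −4453, 6259, −532), (−952, −616, −616, −532, −532, 3248). Let T_C be the 3×6 matrix with rows (1,0,0,0,0,0), (0,1,1,0,0,1), (0,0,0,1,1,0), and T_K the 4×6 matrix with rows (1,0,0,0,0,0), (0,1,1,0,0,0), (0,0,0,1,1,0), (0,0,0,0,0,1). Then Σ_C := T_C Σ_τ T_Cᵀ equals (1/720) times the matrix with rows (65, −32, −33), (−32, 128, −96), (−33, −96, 129) and has rank 2, and Σ_K := T_K Σ_τ T_Kᵀ equals (1/720) times the matrix with rows (65, 2, −33, −34), (2, 100, −58, −44), (−33, −58, 129, −38), (−34, −44, −38, 116) and has rank 3. -/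

import Mathlib

/-- The asymptotic covariance matrix `Σ_τ` of the transcript frequencies under the
i.i.d. null. -/
noncomputable def SigmaTau : Matrix (Fin 6) (Fin 6) ℚ :=
  (1/20160 : ℚ) •
    !![1820, 28, 28, -462, -462, -952;
       28, 1020, 380, -406, -406, -616;
       28, 380, 1020, -406, -406, -616;
       -462, -406, -406, 6259, -4453, -532;
       -462, -406, -406, -4453, 6259, -532;
       -952, -616, -616, -532, -532, 3248]

/-- The aggregation matrix from transcripts to Cayley-distance values. -/
def Tcay : Matrix (Fin 3) (Fin 6) ℚ :=
  !![1, 0, 0, 0, 0, 0;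
     0, 1, 1, 0, 0, 1;
     0, 0, 0, 1, 1, 0]

/-- The aggregation matrix from transcripts to Kendall-distance values. -/
def Tken : Matrix (Fin 4) (Fin 6) ℚ :=
  !![1, 0, 0, 0, 0, 0;
     0, 1, 1, 0, 0, 0;
     0, 0, 0, 1, 1, 0;
     0, 0, 0, 0, 0, 1]

private lemma rankMC :
    (((1/720 : ℚ) • !![65, -32, -33; -32, 128, -96; -33, -96, 129] :
      Matrix (Fin 3) (Fin 3) ℚ)).rank = 2 := by
  have hM : ((1/720 : ℚ) • !![65, -32, -33; -32, 128, -96; -33, -96, 129] :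
      Matrix (Fin 3) (Fin 3) ℚ) =
      !![13/144, -2/45, -11/240; -2/45, 8/45, -2/15; -11/240, -2/15, 43/240] := by
    ext i j
    fin_cases i <;> fin_cases j <;> norm_num
  rw [hM]
  set M : Matrix (Fin 3) (Fin 3) ℚ :=
    !![13/144, -2/45, -11/240; -2/45, 8/45, -2/15; -11/240, -2/15, 43/240] with hMdef
  have hfac : M = (!![1, 0; 0, 1; -1, -1] : Matrix (Fin 3) (Fin 2) ℚ) *
      (!![13/144, -2/45, -11/240; -2/45, 8/45, -2/15] : Matrix (Fin 2) (Fin 3) ℚ) := by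
    ext i j
    fin_cases i <;> fin_cases j <;>
      norm_num [hMdef, Matrix.mul_apply, Fin.sum_univ_succ]
  have hub : M.rank ≤ 2 := by
    rw [hfac]
    exact le_trans (Matrix.rank_mul_le_left _ _)
      (le_trans (Matrix.rank_le_card_width _) (by simp))
  have hlb : 2 ≤ M.rank := by
    set P : Matrix (Fin 2) (Fin 3) ℚ := !![1, 0, 0; 0, 1, 0] with hP
    have hD : P * M * P.transpose = !![13/144, -2/45; -2/45, 8/45] := by
      have ht : P.transpose = !![1,0; 0,1; 0,0] := by
        ext i j; fin_cases i <;> fin_cases j <;> rfl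
      rw [ht]
      ext i j
      fin_cases i <;> fin_cases j <;>
        norm_num [hP, hMdef, Matrix.mul_apply, Fin.sum_univ_succ]
    have hunit : IsUnit (!![13/144, -2/45; -2/45, 8/45] : Matrix (Fin 2) (Fin 2) ℚ) := by
      rw [Matrix.isUnit_iff_isUnit_det, Matrix.det_fin_two_of]
      norm_num
    have h2 : (P * M * P.transpose).rank = 2 := by
      rw [hD, Matrix.rank_of_isUnit _ hunit]; simp
    calc 2 = (P * M * P.transpose).rank := h2.symm
      _ ≤ (P * M).rank := Matrix.rank_mul_le_left _ _
      _ ≤ M.rank := Matrix.rank_mul_le_right _ _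
  exact le_antisymm hub hlb

private lemma rankMK :
    (((1/720 : ℚ) • !![65, 2, -33, -34; 2, 100, -58, -44;
        -33, -58, 129, -38; -34, -44, -38, 116] :
      Matrix (Fin 4) (Fin 4) ℚ)).rank = 3 := by
  have hM : ((1/720 : ℚ) • !![65, 2, -33, -34; 2, 100, -58, -44;
        -33, -58, 129, -38; -34, -44, -38, 116] :
      Matrix (Fin 4) (Fin 4) ℚ) =
      !![13/144, 1/360, -11/240, -17/360;
         1/360, 5/36, -29/360, -11/180;
         -11/240, -29/360, 43/240, -19/360;
         -17/360, -11/180, -19/360, 29/180] := by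
    ext i j
    fin_cases i <;> fin_cases j <;> norm_num
  rw [hM]
  set M : Matrix (Fin 4) (Fin 4) ℚ :=
    !![13/144, 1/360, -11/240, -17/360;
       1/360, 5/36, -29/360, -11/180;
       -11/240, -29/360, 43/240, -19/360;
       -17/360, -11/180, -19/360, 29/180] with hMdef
  have hfac : M = (!![1, 0, 0; 0, 1, 0; 0, 0, 1; -1, -1, -1] : Matrix (Fin 4) (Fin 3) ℚ) *
      (!![13/144, 1/360, -11/240, -17/360;
          1/360, 5/36, -29/360, -11/180;
          -11/240, -29/360, 43/240, -19/360] : Matrix (Fin 3) (Fin 4) ℚ) := by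
    ext i j
    fin_cases i <;> fin_cases j <;>
      norm_num [hMdef, Matrix.mul_apply, Fin.sum_univ_succ]
  have hub : M.rank ≤ 3 := by
    rw [hfac]
    exact le_trans (Matrix.rank_mul_le_left _ _)
      (le_trans (Matrix.rank_le_card_width _) (by simp))
  have hlb : 3 ≤ M.rank := by
    set P : Matrix (Fin 3) (Fin 4) ℚ := !![1, 0, 0, 0; 0, 1, 0, 0; 0, 0, 1, 0] with hP
    have hD : P * M * P.transpose =
        !![13/144, 1/360, -11/240; 1/360, 5/36, -29/360; -11/240, -29/360, 43/240] := by
      have ht : P.transpose = !![1,0,0; 0,1,0; 0,0,1; 0,0,0] := by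
        ext i j; fin_cases i <;> fin_cases j <;> rfl
      rw [ht]
      ext i j
      fin_cases i <;> fin_cases j <;>
        norm_num [hP, hMdef, Matrix.mul_apply, Fin.sum_univ_succ]
    have hunit : IsUnit (!![13/144, 1/360, -11/240; 1/360, 5/36, -29/360;
        -11/240, -29/360, 43/240] : Matrix (Fin 3) (Fin 3) ℚ) := by
      rw [Matrix.isUnit_iff_isUnit_det, Matrix.det_fin_three]
      norm_num [Matrix.cons_val_two, Matrix.vecHead, Matrix.vecTail]
    have h3 : (P * M * P.transpose).rank = 3 := by
      rw [hD, Matrix.rank_of_isUnit _ hunit]; simp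
    calc 3 = (P * M * P.transpose).rank := h3.symm
      _ ≤ (P * M).rank := Matrix.rank_mul_le_left _ _
      _ ≤ M.rank := Matrix.rank_mul_le_right _ _
  exact le_antisymm hub hlb

set_option maxHeartbeats 1600000 in
/-- `Σ_C = T_C Σ_τ T_Cᵀ` and `Σ_K = T_K Σ_τ T_Kᵀ` in explicit form, with ranks `2`
and `3` respectively. -/
theorem sigmaC_sigmaK_eq_and_rank :
    Tcay * SigmaTau * Tcay.transpose = (1/720 : ℚ) •
      !![65, -32, -33;
         -32, 128, -96;
         -33, -96, 129] ∧
    (Tcay * SigmaTau * Tcay.transpose).rank = 2 ∧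
    Tken * SigmaTau * Tken.transpose = (1/720 : ℚ) •
      !![65, 2, -33, -34;
         2, 100, -58, -44;
         -33, -58, 129, -38;
         -34, -44, -38, 116] ∧
    (Tken * SigmaTau * Tken.transpose).rank = 3 := by
  have hC : Tcay * SigmaTau * Tcay.transpose = (1/720 : ℚ) •
      !![65, -32, -33; -32, 128, -96; -33, -96, 129] := by
    have ht : Tcay.transpose = !![1,0,0; 0,1,0; 0,1,0; 0,0,1; 0,0,1; 0,1,0] := by
      ext i j; fin_cases i <;> fin_cases j <;> rfl
    have hTS : Tcay * SigmaTau =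
        (!![13/144, 1/720, 1/720, -11/480, -11/480, -17/360;
            -2/45, 7/180, 7/180, -1/15, -1/15, 1/10;
            -11/240, -29/720, -29/720, 43/480, 43/480, -19/360] :
          Matrix (Fin 3) (Fin 6) ℚ) := by
      ext i j
      fin_cases i <;> fin_cases j <;>
        norm_num [Tcay, SigmaTau, Matrix.mul_apply, Fin.sum_univ_succ]
    rw [hTS, ht]
    ext i j
    fin_cases i <;> fin_cases j <;>
      norm_num [Matrix.mul_apply, Fin.sum_univ_succ]
  have hK : Tken * SigmaTau * Tken.transpose = (1/720 : ℚ) •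
      !![65, 2, -33, -34; 2, 100, -58, -44; -33, -58, 129, -38; -34, -44, -38, 116] := by
    have ht : Tken.transpose =
        !![1,0,0,0; 0,1,0,0; 0,1,0,0; 0,0,1,0; 0,0,1,0; 0,0,0,1] := by
      ext i j; fin_cases i <;> fin_cases j <;> rfl
    have hTS : Tken * SigmaTau =
        (!![13/144, 1/720, 1/720, -11/480, -11/480, -17/360;
            1/360, 5/72, 5/72, -29/720, -29/720, -11/180;
            -11/240, -29/720, -29/720, 43/480, 43/480, -19/360;
            -17/360, -11/360, -11/360, -19/720, -19/720, 29/180] :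
          Matrix (Fin 4) (Fin 6) ℚ) := by
      ext i j
      fin_cases i <;> fin_cases j <;>
        norm_num [Tken, SigmaTau, Matrix.mul_apply, Fin.sum_univ_succ]
    rw [hTS, ht]
    ext i j
    fin_cases i <;> fin_cases j <;>
      norm_num [Matrix.mul_apply, Fin.sum_univ_succ]
  exact ⟨hC, by rw [hC]; exact rankMC, hK, by rw [hK]; exact rankMK⟩
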